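/- Let A be a minimizer of the adversarial risk R̃_ε and let B be a Borel set satisfying op_ε(A) ⊆ B ⊆ cl_ε(A). Then B is also a minimizer of R̃_ε. -/
import Mathlib


open Set Metric MeasureTheory

/-- The dilation `A^ε = {x : dist(x,A) < ε}`. -/
noncomputable def dilation {X : Type*} [PseudoMetricSpace X] (ε : ℝ) (A : Set X) : Set X :=
  Metric.thickening ε A

/-- The erosion `A^{−ε} = {x : dist(x,Aᶜ) ≥ ε}`. -/
noncomputable def erosion {X : Type*} [PseudoMetricSpace X] (ε : ℝ) (A : Set X) : Set X :=
  {x | ENNReal.ofReal ε ≤ EMetric.infEdist x Aᶜ}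

/-- The closing `cl_ε(A) = (A^ε)^{−ε}`. -/
noncomputable def closing {X : Type*} [PseudoMetricSpace X] (ε : ℝ) (A : Set X) : Set X :=
  erosion ε (dilation ε A)

/-- The opening `op_ε(A) = (A^{−ε})^ε`. -/
noncomputable def opening {X : Type*} [PseudoMetricSpace X] (ε : ℝ) (A : Set X) : Set X :=
  dilation ε (erosion ε A)

/-- The adversarial risk in morphological form
`R̃_ε(A) = w₀ ρ₀(A^ε) + w₁(1 − ρ₁(A^{−ε}))`. -/
noncomputable def morphRisk {X : Type*} [PseudoMetricSpace X] [MeasurableSpace X]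
    (ρ₀ ρ₁ : Measure X) (w₀ w₁ ε : ℝ) (A : Set X) : ℝ :=
  w₀ * (ρ₀ (dilation ε A)).toReal + w₁ * (1 - (ρ₁ (erosion ε A)).toReal)

lemma dilation_mono {X : Type*} [PseudoMetricSpace X] (ε : ℝ) {A B : Set X} (h : A ⊆ B) :
    dilation ε A ⊆ dilation ε B :=
  Metric.thickening_subset_of_subset ε h

lemma erosion_mono {X : Type*} [PseudoMetricSpace X] (ε : ℝ) {A B : Set X} (h : A ⊆ B) :
    erosion ε A ⊆ erosion ε B := fun x hx =>
  le_trans hx (EMetric.infEdist_anti (Set.compl_subset_compl.mpr h))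

/-- The opening is contained in the set. -/
lemma opening_subset {X : Type*} [PseudoMetricSpace X] (ε : ℝ) (A : Set X) :
    opening ε A ⊆ A := by
  intro x hx
  obtain ⟨y, hy, hxy⟩ := (Metric.mem_thickening_iff_exists_edist_lt _ _).mp hx
  by_contra hxA
  have hxA' : x ∈ Aᶜ := hxA
  have h2 : EMetric.infEdist y Aᶜ ≤ edist y x := EMetric.infEdist_le_edist_of_mem hxA'
  rw [edist_comm] at h2
  exact absurd (le_trans hy h2) (not_le.mpr hxy)

/-- The set is contained in its closing. -/
lemma subset_closing {X : Type*} [PseudoMetricSpace X] (ε : ℝ) (A : Set X) :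
    A ⊆ closing ε A := by
  intro x hx
  refine EMetric.le_infEdist.mpr fun z hz => ?_
  have h1 : ¬ EMetric.infEdist z A < ENNReal.ofReal ε := by
    intro h; exact hz (Metric.mem_thickening_iff_infEdist_lt.mpr h)
  have h2 : EMetric.infEdist z A ≤ edist z x := EMetric.infEdist_le_edist_of_mem hx
  rw [edist_comm] at h2
  exact le_trans (not_lt.mp h1) h2

/-- Opening of a dilation is the dilation. -/
lemma opening_dilation {X : Type*} [PseudoMetricSpace X] (ε : ℝ) (A : Set X) :
    opening ε (dilation ε A) = dilation ε A := by
  apply Set.Subset.antisymm (opening_subset ε _)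
  intro x hx
  obtain ⟨a, ha, hxa⟩ := (Metric.mem_thickening_iff_exists_edist_lt _ _).mp hx
  exact (Metric.mem_thickening_iff_exists_edist_lt _ _).mpr
    ⟨a, subset_closing ε A ha, hxa⟩

/-- Closing of an erosion is the erosion. -/
lemma closing_erosion {X : Type*} [PseudoMetricSpace X] (ε : ℝ) (A : Set X) :
    closing ε (erosion ε A) = erosion ε A := by
  apply Set.Subset.antisymm _ (subset_closing ε _)
  intro x hx
  refine EMetric.le_infEdist.mpr fun z hz => ?_
  have hz' : z ∈ (dilation ε (erosion ε A))ᶜ := fun h => hz (opening_subset ε A h)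
  exact le_trans hx (EMetric.infEdist_le_edist_of_mem hz')

theorem intermediate_sets_minimize {X : Type*} [MetricSpace X] [MeasurableSpace X]
    [BorelSpace X]
    (ρ₀ ρ₁ : Measure X) [IsProbabilityMeasure ρ₀] [IsProbabilityMeasure ρ₁]
    (w₀ w₁ : ℝ) (hw₀ : 0 ≤ w₀) (hw₁ : 0 ≤ w₁)
    (ε : ℝ) (hε : 0 < ε) (A : Set X) (hA : MeasurableSet A)
    (hAmin : ∀ C : Set X, MeasurableSet C →
      morphRisk ρ₀ ρ₁ w₀ w₁ ε A ≤ morphRisk ρ₀ ρ₁ w₀ w₁ ε C)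
    (B : Set X) (hBmeas : MeasurableSet B)
    (hB₁ : opening ε A ⊆ B) (hB₂ : B ⊆ closing ε A) :
    ∀ C : Set X, MeasurableSet C →
      morphRisk ρ₀ ρ₁ w₀ w₁ ε B ≤ morphRisk ρ₀ ρ₁ w₀ w₁ ε C := by
  intro C hC
  refine le_trans ?_ (hAmin C hC)
  have hdil : dilation ε B ⊆ dilation ε A := by
    calc dilation ε B ⊆ dilation ε (closing ε A) := dilation_mono ε hB₂
    _ = opening ε (dilation ε A) := rfl
    _ = dilation ε A := opening_dilation ε A
  have hero : erosion ε A ⊆ erosion ε B := by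
    calc erosion ε A = closing ε (erosion ε A) := (closing_erosion ε A).symm
    _ = erosion ε (opening ε A) := rfl
    _ ⊆ erosion ε B := erosion_mono ε hB₁
  have h0 : (ρ₀ (dilation ε B)).toReal ≤ (ρ₀ (dilation ε A)).toReal :=
    ENNReal.toReal_mono (measure_ne_top _ _) (measure_mono hdil)
  have h1 : (ρ₁ (erosion ε A)).toReal ≤ (ρ₁ (erosion ε B)).toReal :=
    ENNReal.toReal_mono (measure_ne_top _ _) (measure_mono hero)
  unfold morphRisk
  gcongr
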